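/- arXiv:1803.09594 — 3 statements merged into one kernel-verified Lean document; each statement's English description precedes it below -/
import Mathlib

section
/- Let a, b be distinct complex numbers, n ≥ 4 an integer, and P(z) = ∫₀^{z-a}(t-a)^n(t-b)^4 dt + 1. Then P(a) ≠ P(b); that is, P satisfies Fujimoto's property (H) (P is critically injective). -/
open Polynomial

/-- `P(a) ≠ P(b)`, i.e. `P` is critically injective (property (H)). -/
theorem stmt_3 (a b : ℂ) (hab : a ≠ b) (n : ℕ) (hn : 4 ≤ n)
    (P : ℂ[X])
    (hP' : P.derivative = (X - C a) ^ n * (X - C b) ^ 4)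
    (hPa : P.eval a = 1) :
    P.eval a ≠ P.eval b := by
  obtain ⟨c, rfl⟩ : ∃ c, b = a + c := ⟨b - a, by ring⟩
  have hc0 : c ≠ 0 := by
    intro h
    exact hab (by rw [h, add_zero])
  have h1 : ((n:ℂ)+1) ≠ 0 := by exact_mod_cast (Nat.cast_ne_zero (R := ℂ)).mpr (Nat.succ_ne_zero n)
  have h2 : ((n:ℂ)+1+1) ≠ 0 := by
    have h : ((n+2 : ℕ) : ℂ) ≠ 0 := Nat.cast_ne_zero.mpr (by omega)
    push_cast at h
    intro h'; exact h (by linear_combination h')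
  have h3 : ((n:ℂ)+2+1) ≠ 0 := by
    have h : ((n+3 : ℕ) : ℂ) ≠ 0 := Nat.cast_ne_zero.mpr (by omega)
    push_cast at h
    intro h'; exact h (by linear_combination h')
  have h4 : ((n:ℂ)+3+1) ≠ 0 := by
    have h : ((n+4 : ℕ) : ℂ) ≠ 0 := Nat.cast_ne_zero.mpr (by omega)
    push_cast at h
    intro h'; exact h (by linear_combination h')
  have h5 : ((n:ℂ)+4+1) ≠ 0 := by
    have h : ((n+5 : ℕ) : ℂ) ≠ 0 := Nat.cast_ne_zero.mpr (by omega)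
    push_cast at h
    intro h'; exact h (by linear_combination h')
  set Q : ℂ[X] := C 1 + ∑ k ∈ Finset.range 5,
      C ((Nat.choose 4 k : ℂ) * (-c) ^ (4 - k) / ((n : ℂ) + k + 1)) * (X - C a) ^ (n + k + 1)
    with hQ
  have hQd : derivative Q = derivative P := by
    apply Polynomial.funext
    intro x
    rw [hP', hQ]
    obtain ⟨y, rfl⟩ : ∃ y, x = y + a := ⟨x - a, by ring⟩
    simp only [derivative_add, derivative_C, derivative_sum, derivative_mul, derivative_pow,
      derivative_sub, derivative_X, zero_add, mul_one, sub_zero, zero_mul, mul_zero]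
    simp only [eval_add, eval_mul, eval_pow, eval_sub, eval_X, eval_C, eval_finset_sum,
      Finset.sum_range_succ, Finset.sum_range_zero, Nat.add_sub_cancel, zero_add,
      add_sub_cancel_right]
    have hb' : y + a - (a + c) = y - c := by ring
    rw [hb']
    norm_num [Nat.choose]
    field_simp
    ring
  have hPQ : P = Q := by
    have hd : derivative (P - Q) = 0 := by rw [derivative_sub, hQd, sub_self]
    have hCe := Polynomial.eq_C_of_natDegree_eq_zero
      (Polynomial.natDegree_eq_zero_of_derivative_eq_zero hd)
    have hQa : Q.eval a = 1 := by
      rw [hQ]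
      simp [eval_finset_sum, Finset.sum_range_succ]
    have heva : (P - Q).eval a = (P - Q).coeff 0 := by rw [hCe]; simp
    rw [eval_sub, hPa, hQa, sub_self] at heva
    have h0 : P - Q = 0 := by rw [hCe, ← heva, map_zero]
    exact sub_eq_zero.mp h0
  have hQb : Q.eval (a + c) = 1 + c ^ (n + 5) *
      (24 / (((n:ℂ)+1) * ((n:ℂ)+1+1) * ((n:ℂ)+2+1) * ((n:ℂ)+3+1) * ((n:ℂ)+4+1))) := by
    rw [hQ]
    simp only [eval_add, eval_mul, eval_pow, eval_sub, eval_X, eval_C, eval_finset_sum,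
      Finset.sum_range_succ, Finset.sum_range_zero, zero_add, add_sub_cancel_left]
    norm_num [Nat.choose]
    field_simp
    ring
  rw [hPa, hPQ, hQb]
  intro h
  have hz : c ^ (n + 5) *
      (24 / (((n:ℂ)+1) * ((n:ℂ)+1+1) * ((n:ℂ)+2+1) * ((n:ℂ)+3+1) * ((n:ℂ)+4+1))) = 0 := by
    linear_combination -h
  rcases mul_eq_zero.mp hz with h' | h'
  · exact pow_ne_zero _ hc0 h'
  · rw [_root_.div_eq_zero_iff] at h'
    rcases h' with h' | h'
    · norm_num at h'
    · exact (mul_ne_zero (mul_ne_zero (mul_ne_zero (mul_ne_zero h1 h2) h3) h4) h5) h'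
end

section
/- Let c ∈ ℂ*, ζ ∈ ℂ with ζ⁹ = 1, and a, b, d ∈ ℂ*. Suppose e^c = ζ. Define f(z) = a·e^z / (b - d·sin²(πz/c)). Then the set of points where f(z)⁹ = 1 equals the set of points where f(z+c)⁹ = 1 (indeed f(z+c)⁹ = f(z)⁹ for all z where defined), but if ζ ≠ 1 then f(z+c) ≢ f(z). -/
open Complex

theorem stmt_10_key (c : ℂ) (hc : c ≠ 0) (ζ : ℂ)
    (a b d : ℂ)
    (hec : Complex.exp c = ζ)
    (f : ℂ → ℂ)
    (hf : ∀ z : ℂ, f z =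
      a * Complex.exp z / (b - d * (Complex.sin (Real.pi * z / c)) ^ 2)) :
    ∀ z : ℂ, f (z + c) = ζ * f z := by
  intro z
  rw [hf, hf]
  have h1 : (Real.pi : ℂ) * (z + c) / c = Real.pi * z / c + Real.pi := by
    field_simp
  rw [h1, Complex.sin_add_pi, neg_sq, Complex.exp_add, hec]
  ring

/-- with `ζ⁹ = 1`, `e^c = ζ`, and
`f(z) = a e^z / (b - d sin²(πz/c))`, the 9th powers satisfy `f(z+c)⁹ = f(z)⁹`
(so `{f⁹ = 1}` is shift invariant), but if `ζ ≠ 1` then `f(z+c) ≢ f(z)`. -/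
theorem stmt_10 (c : ℂ) (hc : c ≠ 0) (ζ : ℂ) (hζ : ζ ^ 9 = 1)
    (a b d : ℂ) (ha : a ≠ 0) (hb : b ≠ 0) (hd : d ≠ 0)
    (hec : Complex.exp c = ζ)
    (f : ℂ → ℂ)
    (hf : ∀ z : ℂ, f z =
      a * Complex.exp z / (b - d * (Complex.sin (Real.pi * z / c)) ^ 2)) :
    ({z : ℂ | f z ^ 9 = 1} = {z : ℂ | f (z + c) ^ 9 = 1}) ∧
      (∀ z : ℂ, f (z + c) ^ 9 = f z ^ 9) ∧
      (ζ ≠ 1 → ¬ (∀ z : ℂ, f (z + c) = f z)) := by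
  have key := stmt_10_key c hc ζ a b d hec f hf
  have hpow : ∀ z : ℂ, f (z + c) ^ 9 = f z ^ 9 := by
    intro z; rw [key z, mul_pow, hζ, one_mul]
  refine ⟨?_, hpow, ?_⟩
  · ext z; simp [hpow z]
  · intro hζ1 hall
    have h0 : f 0 ≠ 0 := by
      rw [hf]
      have : (Real.pi : ℂ) * 0 / c = 0 := by ring
      rw [this]
      simp [Complex.exp_zero, ha, hb, sub_eq_zero]
    have := hall 0
    rw [key 0] at this
    exact hζ1 ((mul_left_cancel₀ h0 (by rw [mul_comm, this, mul_one])))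
end

section
/- Let c ∈ ℂ* and f(z) = exp(cos(πz/c)). Then f(z+c) = exp(-cos(πz/c)) = 1/f(z), so f(z)·f(z+c) = 1 for all z, the zero sets of f(z)⁷ - 1 and f(z+c)⁷ - 1 coincide, and the preimage of {0,1} under f equals the preimage of {0,1} under f(·+c); yet f(z+c) ≢ f(z). -/
open Complex

/-- for `f(z) = exp(cos(πz/c))`: `f(z+c) = exp(-cos(πz/c)) = 1/f(z)`,
`f(z)·f(z+c) = 1`, the zero sets of `f⁷ - 1` and `f(·+c)⁷ - 1` coincide, the
preimages of `{0,1}` under `f` and `f(·+c)` coincide, yet `f(z+c) ≢ f(z)`. -/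
theorem stmt_11 (c : ℂ) (hc : c ≠ 0)
    (f : ℂ → ℂ)
    (hf : ∀ z : ℂ, f z = Complex.exp (Complex.cos (Real.pi * z / c))) :
    (∀ z : ℂ, f (z + c) = Complex.exp (-Complex.cos (Real.pi * z / c))) ∧
      (∀ z : ℂ, f z * f (z + c) = 1) ∧
      ({z : ℂ | f z ^ 7 - 1 = 0} = {z : ℂ | f (z + c) ^ 7 - 1 = 0}) ∧
      (f ⁻¹' {0, 1} = (fun z => f (z + c)) ⁻¹' {0, 1}) ∧
      ¬ (∀ z : ℂ, f (z + c) = f z) := by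
  have key : ∀ z : ℂ, f (z + c) = Complex.exp (-Complex.cos (Real.pi * z / c)) := by
    intro z
    rw [hf]
    have : (Real.pi : ℂ) * (z + c) / c = Real.pi * z / c + Real.pi := by
      field_simp
    rw [this, Complex.cos_add, Complex.cos_pi, Complex.sin_pi]
    ring_nf
  have mul1 : ∀ z : ℂ, f z * f (z + c) = 1 := by
    intro z
    rw [hf, key, ← Complex.exp_add, add_neg_cancel, Complex.exp_zero]
  refine ⟨key, mul1, ?_, ?_, ?_⟩
  · ext z
    simp only [Set.mem_setOf_eq, sub_eq_zero]
    have h := mul1 z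
    constructor
    · intro h1
      have : f z ^ 7 * f (z + c) ^ 7 = 1 := by rw [← mul_pow, h, one_pow]
      rw [h1, one_mul] at this; exact this
    · intro h1
      have : f z ^ 7 * f (z + c) ^ 7 = 1 := by rw [← mul_pow, h, one_pow]
      rw [h1, mul_one] at this; exact this
  · ext z
    have hne : ∀ w : ℂ, f w ≠ 0 := by
      intro w; rw [hf]; exact Complex.exp_ne_zero _
    simp only [Set.mem_preimage, Set.mem_insert_iff, Set.mem_singleton_iff,
      hne z, hne (z + c), false_or]
    have h := mul1 z
    constructor
    · intro h1; rw [h1, one_mul] at h; exact h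
    · intro h1; rw [h1, mul_one] at h; exact h
  · intro hcon
    have h0 := hcon 0
    rw [key 0, hf 0] at h0
    simp only [mul_zero, zero_div, Complex.cos_zero] at h0
    have := congrArg (fun w : ℂ => ‖w‖) h0
    simp only [Complex.norm_exp] at this
    norm_num at this
end
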